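/- Let Z, V, X be real Banach spaces with Z compactly embedded in V and V continuously embedded in X, let T > 0, α > 0, κ > 0, and let I : [0,T] × Z → ℝ be Gateaux differentiable in z with derivative D_zI(t,z) ∈ Z*. Assume: (a) the Gårding-like inequality: for every ρ > 0 there is c(ρ) ≥ 0 with ⟨D_zI(t,z₁) − D_zI(t,z₂), z₁ − z₂⟩ ≥ α‖z₁ − z₂‖_Z² − c(ρ)‖z₁ − z₂‖_V² for all t ∈ [0,T] and all z₁, z₂ ∈ Z with ‖z₁‖_Z, ‖z₂‖_Z ≤ ρ; (b) the time-Lipschitz estimate: for every ρ > 0 there is C(ρ) ≥ 0 with ⟨D_zI(t,z) − D_zI(s,z), v⟩ ≤ C(ρ)|t − s|·‖v‖_Z for all t, s ∈ [0,T], all z with ‖z‖_Z ≤ ρ and all v ∈ Z; and (c) R : Z → [0,∞] satisfies κ‖v‖_X ≤ R(v) for all v ∈ Z. Then for every ρ > 0 there exist constants C₁(ρ), C₂(ρ) > 0 such that ⟨D_zI(t,v) − D_zI(s,w), v − w⟩ ≥ (α/2)‖v − w‖_Z² − C₁(ρ)·‖v − w‖_V·R(v − w) − C₂(ρ)·(t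 − s)² for all v, w ∈ Z with ‖v‖_Z, ‖w‖_Z ≤ ρ and all t, s ∈ [0,T]. -/

import Mathlib

open Set

/-- **Combined Gårding-type estimate.** Let `Z, V, X` be real Banach spaces with `Z`
compactly embedded in `V` (via `ι`) and `V` continuously embedded in `X` (via `ιX`),
`T > 0`, `α > 0`, `κ > 0`, and let `I : [0,T] × Z → ℝ` be Gateaux differentiable in `z`
with derivative `DzI(t,z) ∈ Z*`. Assume (a) the Gårding-like inequality, (b) the
time-Lipschitz estimate, and (c) `κ‖v‖_X ≤ R(v)` for all `v ∈ Z`. Then for every `ρ > 0`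
there exist `C₁(ρ), C₂(ρ) > 0` with
`⟨DzI(t,v) − DzI(s,w), v − w⟩ ≥ (α/2)‖v − w‖_Z² − C₁(ρ)‖v − w‖_V·R(v − w) − C₂(ρ)(t − s)²`
for all `v, w` in the closed `ρ`-ball of `Z` and all `t, s ∈ [0,T]`. -/
lemma ehrling {Z V X : Type*}
    [NormedAddCommGroup Z] [NormedSpace ℝ Z]
    [NormedAddCommGroup V] [NormedSpace ℝ V]
    [NormedAddCommGroup X] [NormedSpace ℝ X]
    (ι : Z →L[ℝ] V)
    (hcompact : ∀ s : Set Z, Bornology.IsBounded s → IsCompact (closure (ι '' s)))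
    (ιX : V →L[ℝ] X) (hinjX : Function.Injective ιX)
    (ε : ℝ) (hε : 0 < ε) :
    ∃ C : ℝ, 0 ≤ C ∧ ∀ z : Z, ‖ι z‖ ≤ ε * ‖z‖ + C * ‖ιX (ι z)‖ := by
  by_contra h
  push_neg at h
  choose f hf using fun n : ℕ => h n (Nat.cast_nonneg n)
  have hne : ∀ n, f n ≠ 0 := by
    intro n h0
    have := hf n
    rw [h0] at this
    simp at this
  set u : ℕ → Z := fun n => (‖f n‖)⁻¹ • f n with hu
  have hu1 : ∀ n, ‖u n‖ = 1 := fun n => norm_smul_inv_norm (hne n)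
  have hun : ∀ n, ε + n * ‖ιX (ι (u n))‖ < ‖ι (u n)‖ := by
    intro n
    have hpos : 0 < ‖f n‖ := norm_pos_iff.2 (hne n)
    have h1 : ι (u n) = (‖f n‖)⁻¹ • ι (f n) := by simp [hu, map_smul]
    have h2 : ιX (ι (u n)) = (‖f n‖)⁻¹ • ιX (ι (f n)) := by rw [h1, map_smul]
    have := hf n
    rw [h1]
    rw [map_smul, norm_smul, norm_smul, norm_inv, norm_norm]
    have := (mul_lt_mul_iff_right₀ (inv_pos.2 hpos)).2 (hf n)
    calc ε + ↑n * (‖f n‖⁻¹ * ‖ιX (ι (f n))‖)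
        = ‖f n‖⁻¹ * (ε * ‖f n‖ + ↑n * ‖ιX (ι (f n))‖) := by field_simp
      _ < ‖f n‖⁻¹ * ‖ι (f n)‖ := this
  have hX0 : Filter.Tendsto (fun n => ‖ιX (ι (u n))‖) Filter.atTop (nhds 0) := by
    have hb : ∀ n : ℕ, 1 ≤ n → ‖ιX (ι (u n))‖ ≤ ‖ι‖ / n := by
      intro n hn
      have h1 : (n : ℝ) * ‖ιX (ι (u n))‖ < ‖ι‖ := by
        have := hun n
        have h2 : ‖ι (u n)‖ ≤ ‖ι‖ := by
          calc ‖ι (u n)‖ ≤ ‖ι‖ * ‖u n‖ := ι.le_opNorm _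
            _ = ‖ι‖ := by rw [hu1 n, mul_one]
        nlinarith
      have hnpos : (0:ℝ) < n := by exact_mod_cast hn
      rw [le_div_iff₀ hnpos]; nlinarith
    have htend : Filter.Tendsto (fun n : ℕ => ‖ι‖ / (n:ℝ)) Filter.atTop (nhds 0) :=
      tendsto_const_div_atTop_nhds_zero_nat _
    refine squeeze_zero' ?_ ?_ htend
    · exact Filter.Eventually.of_forall fun n => norm_nonneg _
    · filter_upwards [Filter.eventually_ge_atTop 1] with n hn using hb n hn
  have hmem : ∀ n, ι (u n) ∈ closure (ι '' Metric.closedBall 0 1) := by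
    intro n
    exact subset_closure ⟨u n, by simp [hu1 n], rfl⟩
  obtain ⟨y, _, φ, hφ, hconv⟩ :=
    (hcompact _ Metric.isBounded_closedBall).tendsto_subseq hmem
  have hXy : ιX y = 0 := by
    have h1 : Filter.Tendsto (fun k => ιX (ι (u (φ k)))) Filter.atTop (nhds (ιX y)) :=
      (ιX.continuous.tendsto y).comp hconv
    have h2 : Filter.Tendsto (fun k => ‖ιX (ι (u (φ k)))‖) Filter.atTop (nhds 0) :=
      hX0.comp hφ.tendsto_atTop
    have h3 : Filter.Tendsto (fun k => ιX (ι (u (φ k)))) Filter.atTop (nhds 0) := by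
      rw [tendsto_zero_iff_norm_tendsto_zero]; exact h2
    exact tendsto_nhds_unique h1 h3
  have hy0 : y = 0 := hinjX (by rw [hXy, map_zero])
  have hεle : ε ≤ 0 := by
    have h1 : Filter.Tendsto (fun k => ‖ι (u (φ k))‖) Filter.atTop (nhds 0) := by
      rw [hy0] at hconv
      simpa [Function.comp_def] using (continuous_norm.tendsto (0:V)).comp hconv
    have h2 : ∀ k, ε ≤ ‖ι (u (φ k))‖ := by
      intro k
      have := hun (φ k)
      nlinarith [norm_nonneg (ιX (ι (u (φ k)))), (Nat.cast_nonneg (φ k) : (0:ℝ) ≤ (φ k : ℕ))]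
    exact ge_of_tendsto (α := ℝ) h1 (Filter.Eventually.of_forall h2)
  linarith

set_option maxHeartbeats 1000000 in
theorem stmt13
    {Z V X : Type*}
    [NormedAddCommGroup Z] [NormedSpace ℝ Z] [CompleteSpace Z]
    [NormedAddCommGroup V] [NormedSpace ℝ V] [CompleteSpace V]
    [NormedAddCommGroup X] [NormedSpace ℝ X] [CompleteSpace X]
    (ι : Z →L[ℝ] V) (hinj : Function.Injective ι)
    (hcompact : ∀ s : Set Z, Bornology.IsBounded s → IsCompact (closure (ι '' s)))
    (ιX : V →L[ℝ] X) (hinjX : Function.Injective ιX)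
    (T α κ : ℝ) (hT : 0 < T) (hα : 0 < α) (hκ : 0 < κ)
    (I : ℝ → Z → ℝ) (DzI : ℝ → Z → (Z →L[ℝ] ℝ))
    (hGateaux : ∀ t ∈ Icc (0:ℝ) T, ∀ z v : Z,
      HasDerivAt (fun ε : ℝ => I t (z + ε • v)) (DzI t z v) 0)
    (hGarding : ∀ ρ : ℝ, 0 < ρ → ∃ c : ℝ, 0 ≤ c ∧ ∀ t ∈ Icc (0:ℝ) T, ∀ z₁ z₂ : Z,
      ‖z₁‖ ≤ ρ → ‖z₂‖ ≤ ρ →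
      α * ‖z₁ - z₂‖ ^ 2 - c * ‖ι (z₁ - z₂)‖ ^ 2 ≤ (DzI t z₁ - DzI t z₂) (z₁ - z₂))
    (htLip : ∀ ρ : ℝ, 0 < ρ → ∃ C : ℝ, 0 ≤ C ∧ ∀ t ∈ Icc (0:ℝ) T, ∀ s ∈ Icc (0:ℝ) T,
      ∀ z : Z, ‖z‖ ≤ ρ → ∀ v : Z, (DzI t z - DzI s z) v ≤ C * |t - s| * ‖v‖)
    (R : Z → EReal) (hR0 : ∀ v : Z, 0 ≤ R v)
    (hRlow : ∀ v : Z, ((κ * ‖ιX (ι v)‖ : ℝ) : EReal) ≤ R v) :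
    ∀ ρ : ℝ, 0 < ρ → ∃ C₁ C₂ : ℝ, 0 < C₁ ∧ 0 < C₂ ∧
      ∀ t ∈ Icc (0:ℝ) T, ∀ s ∈ Icc (0:ℝ) T, ∀ v w : Z, ‖v‖ ≤ ρ → ‖w‖ ≤ ρ →
        ((α / 2 * ‖v - w‖ ^ 2 : ℝ) : EReal)
            - ((C₁ * ‖ι (v - w)‖ : ℝ) : EReal) * R (v - w)
            - ((C₂ * (t - s) ^ 2 : ℝ) : EReal)
          ≤ (((DzI t v - DzI s w) (v - w) : ℝ) : EReal) := by
  intro ρ hρ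
  obtain ⟨c, hc, hG⟩ := hGarding ρ hρ
  obtain ⟨C, hC, hL⟩ := htLip ρ hρ
  set ε : ℝ := α / (4 * (c + 1) * (‖ι‖ + 1)) with hεdef
  have hεpos : 0 < ε := by positivity
  obtain ⟨Ce, hCe, hE⟩ := ehrling ι hcompact ιX hinjX ε hεpos
  refine ⟨c * Ce / κ + 1, C ^ 2 / α + 1, by positivity, by positivity, ?_⟩
  intro t ht s hs v w hv hw
  set z : Z := v - w with hzdef
  set a : ℝ := ‖z‖ with hadef
  set b : ℝ := ‖ι z‖ with hbdef
  set d : ℝ := ‖ιX (ι z)‖ with hddef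
  have ha0 : 0 ≤ a := norm_nonneg _
  have hb0 : 0 ≤ b := norm_nonneg _
  have hd0 : 0 ≤ d := norm_nonneg _
  have hεb : c * ε * ‖ι‖ ≤ α / 4 := by
    have hd4 : (0:ℝ) < 4 * (c + 1) * (‖ι‖ + 1) := by positivity
    have h1 : c * ε * ‖ι‖ = α * (c * ‖ι‖) / (4 * (c + 1) * (‖ι‖ + 1)) := by
      rw [hεdef]; ring
    rw [h1, div_le_div_iff₀ hd4 (by norm_num : (0:ℝ) < 4)]
    nlinarith [norm_nonneg ι, hα.le, hc]
  -- the key real inequality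
  have key : α / 2 * a ^ 2 - (c * Ce / κ + 1) * b * (κ * d)
      - (C ^ 2 / α + 1) * (t - s) ^ 2 ≤ (DzI t v - DzI s w) z := by
    have h1 := hG t ht v w hv hw
    have h2 := hL s hs t ht w hw z
    have hEz := hE z
    have hιz : b ≤ ‖ι‖ * a := ι.le_opNorm z
    have hsplit : (DzI t v - DzI s w) z = (DzI t v - DzI t w) z - ((DzI s w - DzI t w) z) := by
      simp only [ContinuousLinearMap.sub_apply]; ring
    have step1 : c * b ^ 2 ≤ c * ε * (a * b) + c * Ce * (b * d) := by
      nlinarith [mul_le_mul_of_nonneg_left hEz (mul_nonneg hc hb0)]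
    have step2 : c * ε * (a * b) ≤ c * ε * ‖ι‖ * a ^ 2 := by
      nlinarith [mul_le_mul_of_nonneg_left hιz (mul_nonneg (mul_nonneg hc hεpos.le) ha0)]
    have step3 : c * ε * ‖ι‖ * a ^ 2 ≤ α / 4 * a ^ 2 :=
      mul_le_mul_of_nonneg_right hεb (sq_nonneg a)
    have young : C * |s - t| * a ≤ α / 4 * a ^ 2 + C ^ 2 / α * (t - s) ^ 2 := by
      have hmul : α * (C * |s - t| * a) ≤ α * (α / 4 * a ^ 2 + C ^ 2 / α * (t - s) ^ 2) := by
        have heq : α * (α / 4 * a ^ 2 + C ^ 2 / α * (t - s) ^ 2)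
            = α * (α / 4 * a ^ 2) + C ^ 2 * (t - s) ^ 2 := by field_simp
        rw [heq]
        nlinarith [sq_nonneg (α * a - 2 * C * |s - t|), sq_abs (s - t), abs_nonneg (s - t)]
      exact le_of_mul_le_mul_left hmul hα
    have hprod : (c * Ce / κ + 1) * b * (κ * d) = c * Ce * (b * d) + κ * (b * d) := by
      field_simp
    have hbd : 0 ≤ κ * (b * d) := by positivity
    have hts : 0 ≤ (t - s) ^ 2 := sq_nonneg _
    rw [hsplit, hprod]
    linarith [h1, h2, step1, step2, step3, young]
  -- pass to EReal
  have hC₁b : (0:ℝ) ≤ (c * Ce / κ + 1) * b := by positivity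
  have hmulE : (((c * Ce / κ + 1) * b * (κ * d) : ℝ) : EReal)
      ≤ (((c * Ce / κ + 1) * b : ℝ) : EReal) * R z := by
    have := mul_le_mul_of_nonneg_left (hRlow z) (by exact_mod_cast hC₁b :
      (0:EReal) ≤ (((c * Ce / κ + 1) * b : ℝ) : EReal))
    calc (((c * Ce / κ + 1) * b * (κ * d) : ℝ) : EReal)
        = (((c * Ce / κ + 1) * b : ℝ) : EReal) * ((κ * d : ℝ) : EReal) := by
          rw [← EReal.coe_mul]
      _ ≤ (((c * Ce / κ + 1) * b : ℝ) : EReal) * R z := this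
  calc ((α / 2 * ‖v - w‖ ^ 2 : ℝ) : EReal)
        - (((c * Ce / κ + 1) * ‖ι (v - w)‖ : ℝ) : EReal) * R (v - w)
        - (((C ^ 2 / α + 1) * (t - s) ^ 2 : ℝ) : EReal)
      ≤ ((α / 2 * a ^ 2 : ℝ) : EReal)
        - (((c * Ce / κ + 1) * b * (κ * d) : ℝ) : EReal)
        - (((C ^ 2 / α + 1) * (t - s) ^ 2 : ℝ) : EReal) :=
        EReal.sub_le_sub (EReal.sub_le_sub le_rfl hmulE) le_rfl
    _ = ((α / 2 * a ^ 2 - (c * Ce / κ + 1) * b * (κ * d)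
        - (C ^ 2 / α + 1) * (t - s) ^ 2 : ℝ) : EReal) := by
        rw [← EReal.coe_sub, ← EReal.coe_sub]
    _ ≤ (((DzI t v - DzI s w) (v - w) : ℝ) : EReal) := EReal.coe_le_coe_iff.2 key
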